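/- Let p, q be positive integers and let G be the double star S_{p,q}: the tree on p + q + 2 vertices consisting of two adjacent vertices u and v, where u is additionally adjacent to p leaves and v is additionally adjacent to q leaves. Then G is balanced if and only if |p − q| ≤ 3. -/

import Mathlib

open SimpleGraph

/-- A finite simple graph is *balanced* if there is a 2-coloring of the vertices such that
the numbers of vertices of the two colors differ by at most 1 and the numbers of
monochromatic edges of the two colors differ by at most 1. -/
def IsBalanced {V : Type*} (G : SimpleGraph V) : Prop :=
  ∃ c : V → Fin 2,
    |(({v | c v = 0} : Set V).ncard : ℤ) - (({v | c v = 1} : Set V).ncard : ℤ)| ≤ 1 ∧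
    |(({e ∈ G.edgeSet | ∀ v ∈ e, c v = 0} : Set (Sym2 V)).ncard : ℤ) -
      (({e ∈ G.edgeSet | ∀ v ∈ e, c v = 1} : Set (Sym2 V)).ncard : ℤ)| ≤ 1

/-- The double star `S_{p,q}` on `p + q + 2` vertices: vertex `0` (= `u`) is adjacent to
vertex `1` (= `v`), the vertices `2, …, p+1` are the leaves adjacent to `u`, and the
vertices `p+2, …, p+q+1` are the leaves adjacent to `v`. -/
def doubleStar (p q : ℕ) : SimpleGraph (Fin (p + q + 2)) :=
  SimpleGraph.fromRel (fun a b =>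
    (a.val = 0 ∧ b.val = 1) ∨
    (a.val = 0 ∧ 2 ≤ b.val ∧ b.val < p + 2) ∨
    (a.val = 1 ∧ p + 2 ≤ b.val))


namespace DS

variable (p q : ℕ)

def z0 : Fin (p + q + 2) := ⟨0, by omega⟩
def z1 : Fin (p + q + 2) := ⟨1, by omega⟩

def f (k : Fin (p + q + 2)) : Sym2 (Fin (p + q + 2)) :=
  if k.val < p + 2 then s(z0 p q, k) else s(z1 p q, k)

def A (c : Fin (p + q + 2) → Fin 2) (i : Fin 2) : ℕ :=
  (Finset.univ.filter (fun k : Fin (p + q + 2) => 2 ≤ k.val ∧ k.val < p + 2 ∧ c k = i)).card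

def B (c : Fin (p + q + 2) → Fin 2) (i : Fin 2) : ℕ :=
  (Finset.univ.filter (fun k : Fin (p + q + 2) => p + 2 ≤ k.val ∧ c k = i)).card

lemma card_mid (hq : 1 ≤ q) : (Finset.univ.filter (fun k : Fin (p + q + 2) => 2 ≤ k.val ∧ k.val < p + 2)).card = p := by
  have h : (Finset.univ.filter (fun k : Fin (p + q + 2) => 2 ≤ k.val ∧ k.val < p + 2))
      = Finset.Ico (⟨2, by omega⟩ : Fin (p + q + 2)) ⟨p + 2, by omega⟩ := by
    ext k; simp [Finset.mem_Ico, Fin.lt_def, Fin.le_def]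
  rw [h, Fin.card_Ico]; simp

lemma card_right (hq : 1 ≤ q) : (Finset.univ.filter (fun k : Fin (p + q + 2) => p + 2 ≤ k.val)).card = q := by
  have h : (Finset.univ.filter (fun k : Fin (p + q + 2) => p + 2 ≤ k.val))
      = Finset.Ici (⟨p + 2, by omega⟩ : Fin (p + q + 2)) := by
    ext k; simp [Finset.mem_Ici, Fin.le_def]
  rw [h, Fin.card_Ici]; simp

lemma two_iff : ∀ x : Fin 2, (x = 1) ↔ ¬ x = 0 := by decide

lemma A_sum (hq : 1 ≤ q) (c : Fin (p + q + 2) → Fin 2) : A p q c 0 + A p q c 1 = p := by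
  have e : ∀ i : Fin 2, A p q c i
      = ((Finset.univ.filter (fun k : Fin (p + q + 2) => 2 ≤ k.val ∧ k.val < p + 2)).filter
          (fun k => c k = i)).card := by
    intro i; unfold A; rw [Finset.filter_filter]; congr 1; ext k; simp only [Finset.mem_filter]; tauto
  rw [e 0, e 1, Finset.filter_congr (fun k _ => two_iff (c k)),
    Finset.card_filter_add_card_filter_not, card_mid p q hq]

lemma B_sum (hq : 1 ≤ q) (c : Fin (p + q + 2) → Fin 2) : B p q c 0 + B p q c 1 = q := by
  have e : ∀ i : Fin 2, B p q c i
      = ((Finset.univ.filter (fun k : Fin (p + q + 2) => p + 2 ≤ k.val)).filter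
          (fun k => c k = i)).card := by
    intro i; unfold B; rw [Finset.filter_filter]
  rw [e 0, e 1, Finset.filter_congr (fun k _ => two_iff (c k)),
    Finset.card_filter_add_card_filter_not, card_right p q hq]


lemma filter_val_eq (m : ℕ) (hm : m < p + q + 2) :
    (Finset.univ.filter fun k : Fin (p + q + 2) => k.val = m) = {⟨m, hm⟩} := by
  ext k; simp [Fin.ext_iff]

lemma card_point (m : ℕ) (hm : m < p + q + 2) (c : Fin (p + q + 2) → Fin 2) (i : Fin 2) :
    (Finset.univ.filter fun k : Fin (p + q + 2) => k.val = m ∧ c k = i).card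
      = if c ⟨m, hm⟩ = i then 1 else 0 := by
  by_cases h : c ⟨m, hm⟩ = i
  · rw [if_pos h]
    have e : (Finset.univ.filter fun k : Fin (p + q + 2) => k.val = m ∧ c k = i) = {⟨m, hm⟩} := by
      ext k
      simp only [Finset.mem_filter, Finset.mem_univ, true_and, Finset.mem_singleton]
      constructor
      · exact fun h' => Fin.ext h'.1
      · rintro rfl; exact ⟨rfl, h⟩
    rw [e, Finset.card_singleton]
  · rw [if_neg h, Finset.card_eq_zero, Finset.filter_eq_empty_iff]
    rintro k - ⟨hv, hc⟩
    have : k = ⟨m, hm⟩ := Fin.ext hv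
    subst this; exact h hc

lemma vcount (c : Fin (p + q + 2) → Fin 2) (i : Fin 2) :
    ({v | c v = i} : Set (Fin (p + q + 2))).ncard
      = (if c (z0 p q) = i then 1 else 0) + (if c (z1 p q) = i then 1 else 0)
        + A p q c i + B p q c i := by
  rw [Set.ncard_eq_toFinset_card', Set.toFinset_setOf]
  have split : (Finset.univ.filter fun v : Fin (p + q + 2) => c v = i)
      = (Finset.univ.filter fun k : Fin (p + q + 2) => k.val = 0 ∧ c k = i)
        ∪ ((Finset.univ.filter fun k : Fin (p + q + 2) => k.val = 1 ∧ c k = i)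
        ∪ ((Finset.univ.filter fun k : Fin (p + q + 2) => 2 ≤ k.val ∧ k.val < p + 2 ∧ c k = i)
        ∪ (Finset.univ.filter fun k : Fin (p + q + 2) => p + 2 ≤ k.val ∧ c k = i))) := by
    ext k
    have hk := k.isLt
    by_cases h : c k = i
    · simp [h, -Fin.val_eq_zero_iff]
      omega
    · simp [h]
  rw [split, Finset.card_union_of_disjoint, Finset.card_union_of_disjoint,
    Finset.card_union_of_disjoint]
  · rw [card_point p q 0 (by omega) c i, card_point p q 1 (by omega) c i]
    show _ = (if c (z0 p q) = i then 1 else 0) + (if c (z1 p q) = i then 1 else 0)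
        + A p q c i + B p q c i
    unfold z0 z1 A B
    ring
  · rw [Finset.disjoint_left]
    intro k hk hk'
    simp only [Finset.mem_filter, Finset.mem_union, Finset.mem_univ, true_and] at hk hk'
    obtain ⟨-, h1, -⟩ := hk
    obtain ⟨h2, -⟩ := hk'
    omega
  · rw [Finset.disjoint_left]
    intro k hk hk'
    simp only [Finset.mem_filter, Finset.mem_union, Finset.mem_univ, true_and] at hk hk'
    obtain ⟨h1, -⟩ := hk
    rcases hk' with ⟨h2, -, -⟩ | ⟨h2, -⟩ <;> omega
  · rw [Finset.disjoint_left]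
    intro k hk hk'
    simp only [Finset.mem_filter, Finset.mem_union, Finset.mem_univ, true_and] at hk hk'
    obtain ⟨h1, -⟩ := hk
    rcases hk' with ⟨h2, -⟩ | ⟨h2, -, -⟩ | ⟨h2, -⟩ <;> omega

lemma f_mem (k : Fin (p + q + 2)) (hk : 1 ≤ k.val) : f p q k ∈ (doubleStar p q).edgeSet := by
  unfold f
  by_cases h : k.val < p + 2
  · rw [if_pos h, mem_edgeSet]
    simp only [doubleStar, fromRel_adj, z0, ne_eq, Fin.ext_iff, true_and]
    omega
  · rw [if_neg h, mem_edgeSet]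
    simp only [doubleStar, fromRel_adj, z1, ne_eq, Fin.ext_iff, true_and]
    omega

lemma edgeSet_eq : (doubleStar p q).edgeSet = f p q '' {k | 1 ≤ k.val} := by
  ext e
  induction e using Sym2.ind with
  | _ a b =>
    constructor
    · intro h
      rw [mem_edgeSet] at h
      simp only [doubleStar, fromRel_adj] at h
      obtain ⟨hne, h | h⟩ := h
      · rcases h with ⟨ha, hb⟩ | ⟨ha, hb1, hb2⟩ | ⟨ha, hb⟩
        · refine ⟨b, by simp [Set.mem_setOf_eq]; omega, ?_⟩
          unfold f
          rw [if_pos (by omega)]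
          have : z0 p q = a := Fin.ext (by simp [z0, ha])
          rw [this]
        · refine ⟨b, by simp [Set.mem_setOf_eq]; omega, ?_⟩
          unfold f
          rw [if_pos (by omega)]
          have : z0 p q = a := Fin.ext (by simp [z0, ha])
          rw [this]
        · refine ⟨b, by simp [Set.mem_setOf_eq]; omega, ?_⟩
          unfold f
          rw [if_neg (by omega)]
          have : z1 p q = a := Fin.ext (by simp [z1, ha])
          rw [this]
      · rcases h with ⟨hb, ha⟩ | ⟨hb, ha1, ha2⟩ | ⟨hb, ha⟩
        · refine ⟨a, by simp [Set.mem_setOf_eq]; omega, ?_⟩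
          unfold f
          rw [if_pos (by omega)]
          have : z0 p q = b := Fin.ext (by simp [z0, hb])
          rw [this, Sym2.eq_swap]
        · refine ⟨a, by simp [Set.mem_setOf_eq]; omega, ?_⟩
          unfold f
          rw [if_pos (by omega)]
          have : z0 p q = b := Fin.ext (by simp [z0, hb])
          rw [this, Sym2.eq_swap]
        · refine ⟨a, by simp [Set.mem_setOf_eq]; omega, ?_⟩
          unfold f
          rw [if_neg (by omega)]
          have : z1 p q = b := Fin.ext (by simp [z1, hb])
          rw [this, Sym2.eq_swap]
    · rintro ⟨k, hk, hfk⟩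
      rw [← hfk]
      exact f_mem p q k hk

lemma injOn : Set.InjOn (f p q) {k | 1 ≤ k.val} := by
  intro k1 h1 k2 h2 he
  simp only [Set.mem_setOf_eq] at h1 h2
  unfold f at he
  refine Fin.ext ?_
  by_cases c1 : k1.val < p + 2 <;> by_cases c2 : k2.val < p + 2 <;>
    simp only [c1, c2, if_pos, if_neg, if_true, if_false, Sym2.eq_iff, Fin.ext_iff, z0, z1] at he <;>
    omega

lemma mono_edges (c : Fin (p + q + 2) → Fin 2) (i : Fin 2) :
    ({e ∈ (doubleStar p q).edgeSet | ∀ v ∈ e, c v = i} : Set (Sym2 (Fin (p + q + 2)))).ncard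
      = (if c (z0 p q) = i ∧ c (z1 p q) = i then 1 else 0)
        + (if c (z0 p q) = i then A p q c i else 0)
        + (if c (z1 p q) = i then B p q c i else 0) := by
  classical
  have h1 : ({e ∈ (doubleStar p q).edgeSet | ∀ v ∈ e, c v = i} : Set (Sym2 (Fin (p + q + 2))))
      = f p q '' ({k | 1 ≤ k.val} ∩ f p q ⁻¹' {e | ∀ v ∈ e, c v = i}) := by
    rw [Set.image_inter_preimage, ← edgeSet_eq]
    rfl
  rw [h1, Set.ncard_image_of_injOn ((injOn p q).mono Set.inter_subset_left)]
  have h2 : {k | 1 ≤ k.val} ∩ f p q ⁻¹' {e | ∀ v ∈ e, c v = i}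
      = {k : Fin (p + q + 2) | (k.val = 1 ∧ (c (z0 p q) = i ∧ c (z1 p q) = i))
          ∨ (2 ≤ k.val ∧ k.val < p + 2 ∧ (c (z0 p q) = i ∧ c k = i))
          ∨ (p + 2 ≤ k.val ∧ (c (z1 p q) = i ∧ c k = i))} := by
    ext k
    simp only [Set.mem_inter_iff, Set.mem_preimage, Set.mem_setOf_eq, f]
    constructor
    · rintro ⟨hk, hP⟩
      by_cases hlt : k.val < p + 2
      · rw [if_pos hlt, Sym2.ball] at hP
        by_cases h1 : k.val = 1
        · left
          have hz : k = z1 p q := Fin.ext (by simp [z1, h1])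
          exact ⟨h1, hP.1, by rw [← hz]; exact hP.2⟩
        · exact Or.inr (Or.inl ⟨by omega, hlt, hP.1, hP.2⟩)
      · rw [if_neg hlt, Sym2.ball] at hP
        exact Or.inr (Or.inr ⟨by omega, hP.1, hP.2⟩)
    · rintro (⟨h1, hc0, hc1⟩ | ⟨h2a, h2b, hc0, hck⟩ | ⟨h3, hc1, hck⟩)
      · refine ⟨by omega, ?_⟩
        rw [if_pos (by omega), Sym2.ball]
        have hz : k = z1 p q := Fin.ext (by simp [z1, h1])
        exact ⟨hc0, by rw [hz]; exact hc1⟩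
      · exact ⟨by omega, by rw [if_pos h2b, Sym2.ball]; exact ⟨hc0, hck⟩⟩
      · exact ⟨by omega, by rw [if_neg (by omega), Sym2.ball]; exact ⟨hc1, hck⟩⟩
  rw [h2, Set.ncard_eq_toFinset_card', Set.toFinset_setOf, Finset.filter_or, Finset.filter_or,
    Finset.card_union_of_disjoint, Finset.card_union_of_disjoint]
  · have e1 : (Finset.univ.filter fun k : Fin (p + q + 2) =>
        k.val = 1 ∧ (c (z0 p q) = i ∧ c (z1 p q) = i)).card
        = if c (z0 p q) = i ∧ c (z1 p q) = i then 1 else 0 := by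
      by_cases h : c (z0 p q) = i ∧ c (z1 p q) = i
      · rw [if_pos h]
        have : (Finset.univ.filter fun k : Fin (p + q + 2) =>
            k.val = 1 ∧ (c (z0 p q) = i ∧ c (z1 p q) = i)) = {z1 p q} := by
          ext k
          simp only [Finset.mem_filter, Finset.mem_univ, true_and, Finset.mem_singleton, h,
            and_true]
          exact ⟨fun hv => Fin.ext (by simpa [z1] using hv), fun hv => by simp [hv, z1]⟩
        rw [this, Finset.card_singleton]
      · rw [if_neg h, Finset.card_eq_zero, Finset.filter_eq_empty_iff]
        rintro k - ⟨-, hc⟩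
        exact h hc
    have e2 : (Finset.univ.filter fun k : Fin (p + q + 2) =>
        2 ≤ k.val ∧ k.val < p + 2 ∧ (c (z0 p q) = i ∧ c k = i)).card
        = if c (z0 p q) = i then A p q c i else 0 := by
      by_cases h : c (z0 p q) = i
      · rw [if_pos h]
        unfold A
        congr 1
        apply Finset.filter_congr
        intro k _
        simp [h]
      · rw [if_neg h, Finset.card_eq_zero, Finset.filter_eq_empty_iff]
        rintro k - ⟨-, -, hc, -⟩
        exact h hc
    have e3 : (Finset.univ.filter fun k : Fin (p + q + 2) =>
        p + 2 ≤ k.val ∧ (c (z1 p q) = i ∧ c k = i)).card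
        = if c (z1 p q) = i then B p q c i else 0 := by
      by_cases h : c (z1 p q) = i
      · rw [if_pos h]
        unfold B
        congr 1
        apply Finset.filter_congr
        intro k _
        simp [h]
      · rw [if_neg h, Finset.card_eq_zero, Finset.filter_eq_empty_iff]
        rintro k - ⟨-, hc, -⟩
        exact h hc
    rw [e1, e2, e3]
    ring
  · rw [Finset.disjoint_left]
    intro k hk hk'
    simp only [Finset.mem_filter, Finset.mem_univ, true_and] at hk hk'
    obtain ⟨-, h1, -⟩ := hk
    obtain ⟨h2, -⟩ := hk'
    omega
  · rw [Finset.disjoint_left]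
    intro k hk hk'
    simp only [Finset.mem_filter, Finset.mem_union, Finset.mem_univ, true_and] at hk hk'
    obtain ⟨h1, -⟩ := hk
    rcases hk' with ⟨h2, -, -⟩ | ⟨h2, -⟩ <;> omega

def col (p q : ℕ) (k : Fin (p + q + 2)) : Fin 2 :=
  if k.val = 0 then 0
  else if k.val = 1 then 1
  else if k.val < p + 2 then (if k.val = 2 ∧ q + 2 ≤ p then 0 else 1)
  else (if k.val = p + 2 ∧ p + 2 ≤ q then 1 else 0)

lemma col_z0 : col p q (z0 p q) = 0 := by simp [col, z0]

lemma col_z1 : col p q (z1 p q) = 1 := by simp [col, z1]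

lemma col_A0 (hp : 1 ≤ p) (hq : 1 ≤ q) :
    A p q (col p q) 0 = if q + 2 ≤ p then 1 else 0 := by
  unfold A
  by_cases h : q + 2 ≤ p
  · rw [if_pos h]
    have e : (Finset.univ.filter fun k : Fin (p + q + 2) =>
        2 ≤ k.val ∧ k.val < p + 2 ∧ col p q k = 0) = {(⟨2, by omega⟩ : Fin (p + q + 2))} := by
      ext k
      simp only [Finset.mem_filter, Finset.mem_univ, true_and, Finset.mem_singleton, Fin.ext_iff]
      constructor
      · rintro ⟨h2, hlt, hc⟩
        simp only [col] at hc
        rw [if_neg (by omega), if_neg (by omega), if_pos hlt] at hc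
        by_cases hk2 : k.val = 2
        · exact hk2
        · rw [if_neg (by tauto)] at hc
          exact absurd hc (by decide)
      · intro hv
        refine ⟨by omega, by omega, ?_⟩
        simp only [col]
        rw [if_neg (by omega), if_neg (by omega), if_pos (by omega), if_pos ⟨hv, h⟩]
    rw [e, Finset.card_singleton]
  · rw [if_neg h, Finset.card_eq_zero, Finset.filter_eq_empty_iff]
    rintro k - ⟨h2, hlt, hc⟩
    simp only [col] at hc
    rw [if_neg (by omega), if_neg (by omega), if_pos hlt, if_neg (by tauto)] at hc
    exact absurd hc (by decide)

lemma col_B1 (hp : 1 ≤ p) (hq : 1 ≤ q) :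
    B p q (col p q) 1 = if p + 2 ≤ q then 1 else 0 := by
  unfold B
  by_cases h : p + 2 ≤ q
  · rw [if_pos h]
    have e : (Finset.univ.filter fun k : Fin (p + q + 2) =>
        p + 2 ≤ k.val ∧ col p q k = 1) = {(⟨p + 2, by omega⟩ : Fin (p + q + 2))} := by
      ext k
      simp only [Finset.mem_filter, Finset.mem_univ, true_and, Finset.mem_singleton, Fin.ext_iff]
      constructor
      · rintro ⟨h2, hc⟩
        simp only [col] at hc
        rw [if_neg (by omega), if_neg (by omega), if_neg (by omega)] at hc
        by_cases hk2 : k.val = p + 2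
        · exact hk2
        · rw [if_neg (by tauto)] at hc
          exact absurd hc (by decide)
      · intro hv
        refine ⟨by omega, ?_⟩
        simp only [col]
        rw [if_neg (by omega), if_neg (by omega), if_neg (by omega), if_pos ⟨hv, h⟩]
    rw [e, Finset.card_singleton]
  · rw [if_neg h, Finset.card_eq_zero, Finset.filter_eq_empty_iff]
    rintro k - ⟨h2, hc⟩
    simp only [col] at hc
    rw [if_neg (by omega), if_neg (by omega), if_neg (by omega), if_neg (by tauto)] at hc
    exact absurd hc (by decide)

end DS

theorem doubleStar_balanced_iff (p q : ℕ) (hp : 1 ≤ p) (hq : 1 ≤ q) :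
    IsBalanced (doubleStar p q) ↔ |(p : ℤ) - (q : ℤ)| ≤ 3 := by
  constructor
  · rintro ⟨c, hv, he⟩
    rw [DS.vcount p q c 0, DS.vcount p q c 1] at hv
    rw [DS.mono_edges p q c 0, DS.mono_edges p q c 1] at he
    have hA := DS.A_sum p q hq c
    have hB := DS.B_sum p q hq c
    have h2 : ∀ x : Fin 2, x = 0 ∨ x = 1 := by decide
    rw [abs_le] at hv he ⊢
    rcases h2 (c (DS.z0 p q)) with h0 | h0 <;> rcases h2 (c (DS.z1 p q)) with h1 | h1 <;>
      simp only [h0, h1, if_pos, if_neg, and_self, and_true, true_and,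
        (by decide : ¬(0 : Fin 2) = 1), (by decide : ¬(1 : Fin 2) = 0), if_true, if_false,
        ite_true, ite_false, reduceIte] at hv he <;>
      omega
  · intro h
    refine ⟨DS.col p q, ?_, ?_⟩
    · rw [DS.vcount p q _ 0, DS.vcount p q _ 1, DS.col_z0, DS.col_z1]
      have hA := DS.A_sum p q hq (DS.col p q)
      have hB := DS.B_sum p q hq (DS.col p q)
      have hA0 := DS.col_A0 p q hp hq
      have hB1 := DS.col_B1 p q hp hq
      rw [abs_le] at h ⊢
      by_cases hc1 : q + 2 ≤ p <;> by_cases hc2 : p + 2 ≤ q <;>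
        simp only [hc1, hc2, if_true, if_false, ite_true, ite_false, reduceIte] at hA0 hB1 <;>
        simp only [(by decide : ¬(0 : Fin 2) = 1), (by decide : ¬(1 : Fin 2) = 0), if_true,
          if_false, ite_true, ite_false, reduceIte] <;>
        omega
    · rw [DS.mono_edges p q _ 0, DS.mono_edges p q _ 1, DS.col_z0, DS.col_z1]
      have hA0 := DS.col_A0 p q hp hq
      have hB1 := DS.col_B1 p q hp hq
      rw [abs_le]
      by_cases hc1 : q + 2 ≤ p <;> by_cases hc2 : p + 2 ≤ q <;>
        simp only [hc1, hc2, if_true, if_false, ite_true, ite_false, reduceIte] at hA0 hB1 <;>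
        simp only [(by decide : ¬(0 : Fin 2) = 1), (by decide : ¬(1 : Fin 2) = 0), if_true,
          if_false, ite_true, ite_false, reduceIte, and_self, and_true, true_and, and_false,
          false_and] <;>
        omega
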